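/- Mortal Matrix reduction for strong equivalence: Fix d, n ≥ 1 and matrices X₁, …, Xₙ ∈ ℤ^{d×d}, let R be the semiring (ℤ^{d×d}, +, ·, 0_d, 1_d), and let Π' consist of the facts p(X₁) ←, …, p(Xₙ) ← together with the rule p(Y) ← p(Z₁), p(Z₂), Y =_R Z₁ * Z₂, and let Π = Π' ∪ { ⊥ ← ¬p(0_d) }. Then Π and Π' are strongly equivalent if and only if there exist k ≥ 1 and indices i₁, …, i_k ∈ {1, …, n} with X_{i₁} · X_{i₂} ⋯ X_{i_k} = 0_d; equivalently, iff p(0_d) belongs to the least set of atoms closed under the rules of Π'. -/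

import Mathlib

/-- The two worlds of HT logic. -/
inductive W : Type | H | T
deriving DecidableEq

/-- `W.le w w'` means `w' ≥ w` in the HT order (with `T ≥ H`). -/
def W.le : W → W → Prop
  | .H, _ => True
  | .T, w' => w' = .T

/-- An HT-interpretation: a pair of sets of (variable-free) atoms with `h ⊆ t`. -/
structure HTI (A : Type*) where
  h : Set A
  t : Set A
  sub : h ⊆ t

/-- The component of a pointed HT-interpretation at world `w`. -/
def HTI.at {A : Type*} (I : HTI A) : W → Set A
  | .H => I.h
  | .T => I.t

/-- Semiring terms built from constants and (global) variables by `+` and `*`. -/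
inductive Trm (R : Type) (g : ℕ) : Type
  | const (k : R)
  | var (x : Fin g)
  | add (s t : Trm R g)
  | mul (s t : Trm R g)

/-- Evaluation of a term under an assignment of the global variables. -/
def Trm.eval {R : Type} [Semiring R] {g : ℕ} (γ : Fin g → R) : Trm R g → R
  | .const k => k
  | .var x => γ x
  | .add s t => s.eval γ + t.eval γ
  | .mul s t => s.eval γ * t.eval γ

/-- Variable-free atoms (the domain being the semiring carrier `R`). -/
abbrev GAtom (P R : Type) : Type := P × List R

/-- Instantiating the arguments of an atom with an assignment `γ`. -/
def instA {P R : Type} {g : ℕ} (γ : Fin g → R) (a : P × List (Fin g ⊕ R)) :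
    GAtom P R :=
  (a.1, a.2.map (Sum.elim γ id))

/-- An `AC`-rule `φ ← ψ₁, …, ψₙ, ¬θ₁, …, ¬θ_m` whose head is an atom or `⊥`
    (`none`), with body atoms, negated body atoms, and body algebraic constraints
    that are equalities between semiring terms; its `g` global variables are
    universally quantified over the carrier `R`. -/
structure NRule (P R : Type) : Type where
  g : ℕ
  head : Option (P × List (Fin g ⊕ R))
  pos : List (P × List (Fin g ⊕ R))
  neg : List (P × List (Fin g ⊕ R))
  eqs : List (Trm R g × Trm R g)

/-- HT satisfaction of a rule at `I_w` (`¬θ = θ → ⊥` is satisfied at `I_{w'}` iff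
    `θ` fails at every `w'' ≥ w'`). -/
def NRule.sat {P R : Type} [Semiring R] (I : HTI (GAtom P R)) (w : W)
    (r : NRule P R) : Prop :=
  ∀ γ : Fin r.g → R, ∀ w', W.le w w' →
    ((∀ a ∈ r.pos, instA γ a ∈ I.at w') ∧
      (∀ a ∈ r.neg, ∀ w'', W.le w' w'' → instA γ a ∉ I.at w'') ∧
      (∀ e ∈ r.eqs, Trm.eval γ e.1 = Trm.eval γ e.2)) →
    (match r.head with
      | some a => instA γ a ∈ I.at w'
      | none => False)

/-- HT satisfaction of a program. -/
def progSat {P R : Type} [Semiring R] (Pr : Set (NRule P R))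
    (I : HTI (GAtom P R)) (w : W) : Prop :=
  ∀ r ∈ Pr, r.sat I w

/-- `J` is an equilibrium model of `Pr`. -/
def EqModel {P R : Type} [Semiring R] (Pr : Set (NRule P R))
    (J : Set (GAtom P R)) : Prop :=
  progSat Pr ⟨J, J, le_refl J⟩ .H ∧
    ∀ J' (h : J' ⊆ J), J' ≠ J → ¬ progSat Pr ⟨J', J, h⟩ .H

section MortalMatrix

/-- The semiring `(ℤ^{d×d}, +, ·, 0_d, 1_d)` of `d×d` integer matrices. -/
abbrev MatR (d : ℕ) : Type := Matrix (Fin d) (Fin d) ℤ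

variable {d n : ℕ}

/-- The fact `p(m) ←`. -/
def factRule (m : MatR d) : NRule Unit (MatR d) :=
  ⟨0, some ((), [Sum.inr m]), [], [], []⟩

/-- The constraint rule `⊥ ← ¬p(0_d)`. -/
def botRule (d : ℕ) : NRule Unit (MatR d) :=
  ⟨0, none, [], [((), [Sum.inr (0 : MatR d)])], []⟩

/-- The rule `p(Y) ← p(Z₁), p(Z₂), Y =_R Z₁ * Z₂`. -/
def prodRule (d : ℕ) : NRule Unit (MatR d) :=
  ⟨3, some ((), [Sum.inl 0]), [((), [Sum.inl 1]), ((), [Sum.inl 2])], [],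
    [(Trm.var 0, Trm.mul (Trm.var 1) (Trm.var 2))]⟩

/-- The `AC`-program `Π` of the Mortal Matrix reduction. -/
def mortalProg (X : Fin n → MatR d) : Set (NRule Unit (MatR d)) :=
  {r | ∃ i : Fin n, r = factRule (X i)} ∪ {botRule d, prodRule d}

/-- `Π` from the paper: the facts and the product rule, plus the constraint rule. -/
def mortalProgFull (X : Fin n → MatR d) : Set (NRule Unit (MatR d)) :=
  {r | ∃ i : Fin n, r = factRule (X i)} ∪ {prodRule d} ∪ {botRule d}

/-- `Π'` from the paper: the facts and the product rule only. -/
def mortalProgPos (X : Fin n → MatR d) : Set (NRule Unit (MatR d)) :=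
  {r | ∃ i : Fin n, r = factRule (X i)} ∪ {prodRule d}

/-- Strong equivalence: for every program `Π''`, the equilibrium models of
    `Π₁ ∪ Π''` and `Π₂ ∪ Π''` coincide. -/
def StrongEq {P R : Type} [Semiring R] (P1 P2 : Set (NRule P R)) : Prop :=
  ∀ Pr : Set (NRule P R), ∀ J : Set (GAtom P R),
    EqModel (P1 ∪ Pr) J ↔ EqModel (P2 ∪ Pr) J

/-- The least set of matrices containing `X₁, …, Xₙ` and closed under products,
    i.e. the least set of atoms closed under the rules of `Π'`. -/
def leastClosed (X : Fin n → MatR d) : Set (MatR d) :=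
  ⋂₀ {S : Set (MatR d) | (∀ i : Fin n, X i ∈ S) ∧
    ∀ y z : MatR d, y ∈ S → z ∈ S → y * z ∈ S}

namespace MortalAux

/-- The ground atom `p(m)`. -/
def atomOf (m : MatR d) : GAtom Unit (MatR d) := ((), [m])

lemma atomOf_inj {m m' : MatR d} (h : atomOf m = atomOf m') : m = m' := by
  simpa [atomOf] using h

lemma lc_mem (X : Fin n → MatR d) (i : Fin n) : X i ∈ leastClosed X :=
  Set.mem_sInter.2 fun _ hS => hS.1 i

lemma lc_mul {X : Fin n → MatR d} {y z : MatR d} (hy : y ∈ leastClosed X)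
    (hz : z ∈ leastClosed X) : y * z ∈ leastClosed X :=
  Set.mem_sInter.2 fun S hS =>
    hS.2 y z (Set.mem_sInter.1 hy S hS) (Set.mem_sInter.1 hz S hS)

lemma prod_mem_lc (X : Fin n → MatR d) :
    ∀ k (f : Fin (k + 1) → Fin n),
      (List.ofFn fun j => X (f j)).prod ∈ leastClosed X := by
  intro k
  induction k with
  | zero =>
    intro f
    simpa [List.ofFn_succ] using lc_mem X (f 0)
  | succ k ih =>
    intro f
    rw [List.ofFn_succ, List.prod_cons]
    exact lc_mul (lc_mem X (f 0)) (ih fun j => f j.succ)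

lemma lc_subset_prods (X : Fin n → MatR d) :
    leastClosed X ⊆ {m | ∃ k : ℕ, 1 ≤ k ∧ ∃ f : Fin k → Fin n,
      (List.ofFn fun j => X (f j)).prod = m} := by
  apply Set.sInter_subset_of_mem
  constructor
  · intro i
    exact ⟨1, le_refl 1, fun _ => i, by simp⟩
  · rintro y z ⟨k₁, hk₁, f₁, hf₁⟩ ⟨k₂, hk₂, f₂, hf₂⟩
    refine ⟨k₁ + k₂, le_trans hk₁ (Nat.le_add_right _ _), Fin.append f₁ f₂, ?_⟩
    rw [List.ofFn_add]
    have hcl : ∀ i : Fin k₁, Fin.append f₁ f₂ (Fin.castLE (Nat.le_add_right k₁ k₂) i) = f₁ i :=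
      fun i => Fin.append_left f₁ f₂ i
    simp only [hcl, Fin.append_left, Fin.append_right, List.prod_append, hf₁, hf₂]

lemma part2 (X : Fin n → MatR d) :
    (∃ k : ℕ, 1 ≤ k ∧ ∃ f : Fin k → Fin n,
        (List.ofFn fun j => X (f j)).prod = (0 : MatR d)) ↔
      (0 : MatR d) ∈ leastClosed X := by
  constructor
  · rintro ⟨k, hk, f, hf⟩
    obtain ⟨k', rfl⟩ : ∃ k', k = k' + 1 := ⟨k - 1, (Nat.succ_pred_eq_of_pos hk).symm⟩
    rw [← hf]
    exact prod_mem_lc X k' f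
  · intro h0
    exact lc_subset_prods X h0

lemma le_T (w : W) : W.le w .T := by cases w <;> trivial

lemma le_H_any (w : W) : W.le .H w := trivial

lemma botRule_sat_iff (I : HTI (GAtom Unit (MatR d))) (w : W) :
    (botRule d).sat I w ↔ atomOf (0 : MatR d) ∈ I.t := by
  constructor
  · intro hs
    by_contra h0
    refine hs (fun x => x.elim0) .T (le_T w) ⟨?_, ?_, ?_⟩
    · intro a ha; exact absurd ha List.not_mem_nil
    · intro a ha w'' hw''
      have hw : w'' = W.T := hw''
      subst hw
      have ha' : a = ((), [Sum.inr (0 : MatR d)]) := by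
        exact List.mem_singleton.mp ha
      subst ha'
      simpa [instA, atomOf, HTI.at] using h0
    · intro e he; exact absurd he List.not_mem_nil
  · intro h0 γ w' _ hcond
    obtain ⟨_, hneg, _⟩ := hcond
    have := hneg ((), [Sum.inr (0 : MatR d)]) (List.mem_singleton.mpr rfl) .T (le_T w')
    exact this (by simpa [instA, atomOf, HTI.at] using h0)

lemma factRule_mem (X : Fin n → MatR d) (i : Fin n) :
    factRule (X i) ∈ mortalProgPos X := Or.inl ⟨i, rfl⟩

lemma prodRule_mem (X : Fin n → MatR d) :
    prodRule d ∈ mortalProgPos X := Or.inr rfl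

lemma factRule_sat_iff (m : MatR d) (I : HTI (GAtom Unit (MatR d))) (w : W) :
    (factRule m).sat I w ↔ ∀ w', W.le w w' → atomOf m ∈ I.at w' := by
  constructor
  · intro hs w' hle
    have h := hs (fun x => x.elim0) w' hle
      ⟨by intro a ha; exact absurd ha List.not_mem_nil,
       by intro a ha; exact absurd ha List.not_mem_nil,
       by intro e he; exact absurd he List.not_mem_nil⟩
    simpa [factRule, instA, atomOf] using h
  · intro h γ w' hle _
    exact h w' hle

lemma prodRule_sat_iff (I : HTI (GAtom Unit (MatR d))) (w : W) :
    (prodRule d).sat I w ↔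
      ∀ (y z : MatR d) (w' : W), W.le w w' →
        atomOf y ∈ I.at w' → atomOf z ∈ I.at w' →
          atomOf (y * z) ∈ I.at w' := by
  constructor
  · intro hs y z w' hle hy hz
    have h := hs ![y * z, y, z] w' hle ⟨?_, ?_, ?_⟩
    · simpa [prodRule, instA, atomOf] using h
    · intro a ha
      rcases ha with _ | ⟨_, _ | ⟨_, ha⟩⟩
      · exact hy
      · exact hz
      · exact absurd ha List.not_mem_nil
    · intro a ha; exact absurd ha List.not_mem_nil
    · intro e he
      replace he := List.mem_singleton.mp he
      subst he
      simp [Trm.eval]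
  · intro h γ w' hle hcond
    obtain ⟨hpos, -, heqs⟩ := hcond
    have h1 := hpos _ List.mem_cons_self
    have h2 := hpos _ (List.mem_cons_of_mem _ List.mem_cons_self)
    have heq := heqs _ List.mem_cons_self
    exact (congrArg (fun m => atomOf m ∈ I.at w') heq).mpr (h _ _ w' hle h1 h2)

/-- Any HT-model of `Π'` at world `H` contains all atoms `p(m)`, `m ∈ leastClosed X`,
    in both components. -/
lemma sat_closed {X : Fin n → MatR d} {I : HTI (GAtom Unit (MatR d))}
    (hs : progSat (mortalProgPos X) I .H) (w' : W) :
    leastClosed X ⊆ {m | atomOf m ∈ I.at w'} := by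
  apply Set.sInter_subset_of_mem
  refine ⟨fun i => ?_, fun y z hy hz => ?_⟩
  · exact (factRule_sat_iff (X i) I .H).mp (hs _ (factRule_mem X i)) w' (le_H_any w')
  · exact (prodRule_sat_iff I .H).mp (hs _ (prodRule_mem X)) y z w' (le_H_any w') hy hz

lemma atomOf_mem_image {S : Set (MatR d)} {m : MatR d} :
    atomOf m ∈ atomOf '' S ↔ m ∈ S := by
  constructor
  · rintro ⟨m', hm', hE⟩
    rwa [← atomOf_inj hE]
  · intro h; exact ⟨m, h, rfl⟩

/-- The canonical interpretation `L = atomOf '' leastClosed X` satisfies `Π'`. -/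
lemma L_sat {X : Fin n → MatR d} {J' J : Set (GAtom Unit (MatR d))} (hsub : J' ⊆ J)
    (hJ' : ∀ m ∈ leastClosed X, atomOf m ∈ J')
    (hJ'' : ∀ m : MatR d, atomOf m ∈ J → m ∈ leastClosed X) :
    progSat (mortalProgPos X) ⟨J', J, hsub⟩ .H := by
  have hat : ∀ w' : W, ∀ m ∈ leastClosed X, atomOf m ∈ (HTI.mk J' J hsub).at w' := by
    intro w' m hm
    cases w'
    · exact hJ' m hm
    · exact hsub (hJ' m hm)
  have hat' : ∀ w' : W, ∀ m : MatR d, atomOf m ∈ (HTI.mk J' J hsub).at w' →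
      m ∈ leastClosed X := by
    intro w' m hm
    cases w'
    · exact hJ'' m (hsub hm)
    · exact hJ'' m hm
  intro r hr
  rcases hr with ⟨i, rfl⟩ | hr
  · rw [factRule_sat_iff]
    intro w' _
    exact hat w' (X i) (lc_mem X i)
  · have hr' : r = prodRule d := hr
    subst hr'
    rw [prodRule_sat_iff]
    intro y z w' _ hy hz
    exact hat w' _ (lc_mul (hat' w' y hy) (hat' w' z hz))

lemma progSat_union {P R : Type} [Semiring R] {A B : Set (NRule P R)}
    {I : HTI (GAtom P R)} {w : W} :
    progSat (A ∪ B) I w ↔ progSat A I w ∧ progSat B I w := by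
  constructor
  · intro h
    exact ⟨fun r hr => h r (Or.inl hr), fun r hr => h r (Or.inr hr)⟩
  · rintro ⟨hA, hB⟩ r hr
    rcases hr with hr | hr
    · exact hA r hr
    · exact hB r hr

lemma full_eq (X : Fin n → MatR d) :
    mortalProgFull X = mortalProgPos X ∪ {botRule d} := rfl

lemma eqmodel_congr {P R : Type} [Semiring R] {P1 P2 : Set (NRule P R)}
    (h : ∀ I : HTI (GAtom P R), progSat P1 I .H ↔ progSat P2 I .H)
    (J : Set (GAtom P R)) : EqModel P1 J ↔ EqModel P2 J := by
  unfold EqModel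
  constructor
  · rintro ⟨h1, h2⟩
    exact ⟨(h _).mp h1, fun J' hs hne hp => h2 J' hs hne ((h _).mpr hp)⟩
  · rintro ⟨h1, h2⟩
    exact ⟨(h _).mpr h1, fun J' hs hne hp => h2 J' hs hne ((h _).mp hp)⟩

end MortalAux

open MortalAux

/-- **Mortal Matrix reduction for strong equivalence**: for `d, n ≥ 1` and
    matrices `X₁, …, Xₙ ∈ ℤ^{d×d}`, letting `Π'` consist of the facts `p(Xᵢ) ←`
    and the rule `p(Y) ← p(Z₁), p(Z₂), Y =_R Z₁ * Z₂`, and `Π = Π' ∪ {⊥ ← ¬p(0_d)}`: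
    `Π` and `Π'` are strongly equivalent iff some nonempty product of the matrices
    is `0_d`; equivalently, iff `p(0_d)` belongs to the least set of atoms closed
    under the rules of `Π'`. -/
theorem mortal_matrix_strong_equivalence (hd : 1 ≤ d) (hn : 1 ≤ n)
    (X : Fin n → MatR d) :
    (StrongEq (mortalProgFull X) (mortalProgPos X) ↔
      ∃ k : ℕ, 1 ≤ k ∧ ∃ f : Fin k → Fin n,
        (List.ofFn fun j => X (f j)).prod = (0 : MatR d))
    ∧ ((∃ k : ℕ, 1 ≤ k ∧ ∃ f : Fin k → Fin n,
        (List.ofFn fun j => X (f j)).prod = (0 : MatR d)) ↔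
      (0 : MatR d) ∈ leastClosed X) := by
  constructor
  · -- StrongEq ↔ nonempty zero product
    rw [part2 X]
    constructor
    · -- StrongEq → 0 ∈ leastClosed X
      intro hSE
      by_contra h0
      -- counter-program: the empty program; counter-model: L
      set L : Set (GAtom Unit (MatR d)) := atomOf '' leastClosed X with hL
      have hmemL : ∀ m : MatR d, atomOf m ∈ L ↔ m ∈ leastClosed X := by
        intro m; exact atomOf_mem_image
      have hPos : EqModel (mortalProgPos X ∪ (∅ : Set (NRule Unit (MatR d)))) L := by
        rw [Set.union_empty]
        constructor
        · exact L_sat (le_refl L) (fun m hm => (hmemL m).mpr hm)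
            (fun m hm => (hmemL m).mp hm)
        · intro J' hs hne hp
          apply hne
          apply Set.Subset.antisymm hs
          rintro a ⟨m, hm, rfl⟩
          exact sat_closed hp .H hm
      have hFull : ¬ EqModel (mortalProgFull X ∪ (∅ : Set (NRule Unit (MatR d)))) L := by
        rw [Set.union_empty]
        rintro ⟨hmod, -⟩
        have hb : (botRule d).sat ⟨L, L, le_refl L⟩ .H :=
          hmod (botRule d) (Or.inr rfl)
        have : atomOf (0 : MatR d) ∈ L := (botRule_sat_iff _ _).mp hb
        exact h0 ((hmemL 0).mp this)
      exact hFull ((hSE ∅ L).mpr hPos)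
    · -- 0 ∈ leastClosed X → StrongEq
      intro h0 Pr J
      apply eqmodel_congr
      intro I
      rw [full_eq, Set.union_assoc, progSat_union, progSat_union, progSat_union]
      constructor
      · rintro ⟨hP, -, hPr⟩
        exact ⟨hP, hPr⟩
      · rintro ⟨hP, hPr⟩
        refine ⟨hP, ?_, hPr⟩
        intro r hr
        have hr' : r = botRule d := hr
        subst hr'
        rw [botRule_sat_iff]
        exact sat_closed hP .T h0
  · exact part2 X


end MortalMatrix
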